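/- Let (K,L) be a pair of simplicial complexes, i.e., L is a subcomplex of K. Then ν²(Sd(L)) ⊆ Sd(ν(L)) as subcomplexes of Sd(K), where ν denotes the neighborhood taken in Sd(K) on the left-hand side and in K on the right-hand side. -/

import Mathlib

/-- An abstract simplicial complex on the vertex type `V`: a family of finite subsets of `V`
closed under taking subsets. -/
structure Cplx (V : Type*) where
  faces : Set (Set V)
  finite_mem : ∀ σ ∈ faces, Set.Finite σ
  down_closed : ∀ σ ∈ faces, ∀ τ ⊆ σ, τ ∈ faces

/-- The vertex set of a simplicial complex. -/
def Cplx.verts {V : Type*} (K : Cplx V) : Set V := {v | ({v} : Set V) ∈ K.faces}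

/-- `a` is an action of the group `Γ` on the vertex type of `K` by simplicial automorphisms. -/
def IsCplxAction (Γ : Type*) [Group Γ] {V : Type*} (a : Γ → V → V) (K : Cplx V) : Prop :=
  (∀ v, a 1 v = v) ∧ (∀ γ γ' : Γ, ∀ v, a (γ * γ') v = a γ (a γ' v)) ∧
    ∀ γ : Γ, ∀ σ ∈ K.faces, (a γ) '' σ ∈ K.faces

/-- A simplicial multi-map from `K` to `L`: it assigns to each vertex of `K` a nonempty subset
of the vertices of `L`, so that `⋃ v ∈ σ, η v` is a simplex of `L` for every simplex `σ` of
`K`. -/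
def IsMultiMap {V W : Type*} (K : Cplx V) (L : Cplx W) (η : V → Set W) : Prop :=
  (∀ v ∈ K.verts, (η v).Nonempty) ∧ ∀ σ ∈ K.faces, (⋃ v ∈ σ, η v) ∈ L.faces

/-- A Γ-equivariant simplicial multi-map, i.e. an element of `Map_Γ(K, L)`. -/
def IsEquivMultiMap (Γ : Type*) [Group Γ] {V W : Type*} (a : Γ → V → V) (b : Γ → W → W)
    (K : Cplx V) (L : Cplx W) (η : V → Set W) : Prop :=
  IsMultiMap K L η ∧ ∀ γ : Γ, ∀ v ∈ K.verts, η (a γ v) = (b γ) '' (η v)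

/-- Pointwise order on multi-maps out of `K` (on the vertices of `K`). -/
def mmLE {V W : Type*} (K : Cplx V) (η η' : V → Set W) : Prop := ∀ v ∈ K.verts, η v ⊆ η' v

/-- An element of `Def_Γ(K, L)`: a Γ-equivariant simplicial multi-map `K → K` with
`η v = {v}` for every vertex `v` of the subcomplex `L`. -/
def IsDefMultiMap (Γ : Type*) [Group Γ] {V : Type*} (a : Γ → V → V) (K L : Cplx V)
    (η : V → Set V) : Prop :=
  IsEquivMultiMap Γ a a K K η ∧ ∀ v ∈ L.verts, η v = {v}

/-- One step of a zigzag in `Def_Γ(K, L)`: both multi-maps lie in `Def_Γ(K, L)` and they are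
comparable. -/
def cplxDefStep (Γ : Type*) [Group Γ] {V : Type*} (a : Γ → V → V) (K L : Cplx V)
    (η η' : V → Set V) : Prop :=
  IsDefMultiMap Γ a K L η ∧ IsDefMultiMap Γ a K L η' ∧ (mmLE K η η' ∨ mmLE K η' η)

/-- The Γ-simplicial complex `K` strongly Γ-collapses to its Γ-subcomplex `L`: there is a
simplicial map `f` belonging to the identity component of `Def_Γ(K, L)` (joined to the
identity by a finite zigzag of pairwise comparable elements) whose image is contained in
`L`. -/
def CplxCollapses (Γ : Type*) [Group Γ] {V : Type*} (a : Γ → V → V) (K L : Cplx V) : Prop :=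
  ∃ f : V → V, IsDefMultiMap Γ a K L (fun v => {f v}) ∧
    Relation.ReflTransGen (cplxDefStep Γ a K L) (fun v => {v}) (fun v => {f v}) ∧
    ∀ σ ∈ K.faces, f '' σ ∈ L.faces
/-- The face poset of `K`, realized as the set of nonempty simplices of `K` inside the poset
`Set V` (ordered by inclusion). -/
def facePoset {V : Type*} (K : Cplx V) : Set (Set V) := {σ | σ ∈ K.faces ∧ σ.Nonempty}

/-- The barycentric subdivision `Sd(K) = Δ(FK)`: the simplicial complex on the nonempty
simplices of `K` whose simplices are the finite chains of the face poset of `K`. -/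
def sd {V : Type*} (K : Cplx V) : Cplx (Set V) where
  faces := {c | c.Finite ∧ (∀ σ ∈ c, σ ∈ facePoset K) ∧ IsChain (· ⊆ ·) c}
  finite_mem := fun _ h => h.1
  down_closed := fun c hc d hdc =>
    ⟨hc.1.subset hdc, fun σ hσ => hc.2.1 σ (hdc hσ),
      by obtain ⟨-, -, h⟩ := hc; exact h.mono hdc⟩
/-- The neighborhood `ν_K(L) = ⋃_{v ∈ V(L)} st_K(v)` of the subcomplex `L` in `K`. -/
def nbhd {V : Type*} (K L : Cplx V) : Cplx V where
  faces := {σ | ∃ v ∈ L.verts, insert v σ ∈ K.faces}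
  finite_mem := fun σ h => by
    obtain ⟨v, -, h⟩ := h
    exact (K.finite_mem _ h).subset (Set.subset_insert _ _)
  down_closed := fun σ h τ hτσ => by
    obtain ⟨v, hv, h⟩ := h
    exact ⟨v, hv, K.down_closed _ h _ (Set.insert_subset_insert hτσ)⟩

/-- The iterated neighborhood `ν^r_K(L)` (with `ν^0_K(L) = L`). -/
def nbhdIter {V : Type*} (K L : Cplx V) : ℕ → Cplx V
  | 0 => L
  | r + 1 => nbhd K (nbhdIter K L r)

/-- Let (K,L) be a pair of simplicial complexes (L a subcomplex of K).  Then
ν²(Sd(L)) ⊆ Sd(ν(L)) as subcomplexes of Sd(K), where ν is taken in Sd(K) on the left and in K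
on the right. -/
theorem nbhd_sq_sd_subset_sd_nbhd {V : Type*} (K L : Cplx V) (hLK : L.faces ⊆ K.faces) :
    (nbhdIter (sd K) (sd L) 2).faces ⊆ (sd (nbhd K L)).faces := by
  intro c hc
  obtain ⟨τ, hτv, hins⟩ := hc
  obtain ⟨σ, hσv, hX⟩ := hτv
  have hσL : σ ∈ facePoset L := hσv.2.1 σ (Set.mem_singleton σ)
  have hτK : τ ∈ facePoset K :=
    hX.2.1 τ (Set.mem_insert_of_mem _ (Set.mem_singleton τ))
  -- σ and τ are comparable
  have hστ : σ ⊆ τ ∨ τ ⊆ σ := by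
    by_cases h : σ = τ
    · exact Or.inl (h ▸ Set.Subset.rfl)
    · exact hX.2.2 (Set.mem_insert _ _)
        (Set.mem_insert_of_mem _ (Set.mem_singleton τ)) h
  -- pick v ∈ σ ∩ τ
  obtain ⟨v, hvσ, hvτ⟩ : ∃ v, v ∈ σ ∧ v ∈ τ := by
    rcases hστ with h | h
    · obtain ⟨v, hv⟩ := hσL.2; exact ⟨v, hv, h hv⟩
    · obtain ⟨v, hv⟩ := hτK.2; exact ⟨v, h hv, hv⟩
  have hvL : v ∈ L.verts :=
    L.down_closed σ hσL.1 {v} (Set.singleton_subset_iff.2 hvσ)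
  refine ⟨hins.1.subset (Set.subset_insert _ _), ?_,
    hins.2.2.mono (Set.subset_insert _ _)⟩
  intro ρ hρ
  have hρK : ρ ∈ facePoset K := hins.2.1 ρ (Set.mem_insert_of_mem _ hρ)
  refine ⟨⟨v, hvL, ?_⟩, hρK.2⟩
  by_cases h : τ ⊆ ρ
  · rw [Set.insert_eq_self.2 (h hvτ)]
    exact hρK.1
  · have hρτ : ρ ⊆ τ := by
      have hne : ρ ≠ τ := fun e => h (e ▸ Set.Subset.rfl)
      rcases hins.2.2 (Set.mem_insert_of_mem _ hρ) (Set.mem_insert _ _) hne with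
        h' | h'
      · exact h'
      · exact absurd h' h
    exact K.down_closed τ hτK.1 _ (Set.insert_subset_iff.2 ⟨hvτ, hρτ⟩)
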